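/- For every connected graph G of order n ≥ 2, eqdim(G) = 1 if and only if Δ(G) = n − 1. -/
import Mathlib


/-- `S` is a distance-equalizer set of `G`. -/
def IsDistEqSet {V : Type*} (G : SimpleGraph V) (S : Set V) : Prop :=
  ∀ u v : V, u ∉ S → v ∉ S → u ≠ v → ∃ x ∈ S, G.dist u x = G.dist v x

/-- The equidistant dimension of `G`. -/
noncomputable def eqdim {V : Type*} (G : SimpleGraph V) : ℕ :=
  sInf {k | ∃ S : Finset V, IsDistEqSet G ↑S ∧ S.card = k}

theorem stmt0 {V : Type*} [Fintype V] (G : SimpleGraph V) [DecidableRel G.Adj]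
    (hconn : G.Connected) (hn : 2 ≤ Fintype.card V) :
    eqdim G = 1 ↔ G.maxDegree = Fintype.card V - 1 := by
  classical
  have hne : Nonempty V := Fintype.card_pos_iff.mp (by omega)
  constructor
  · intro h
    have hnonempty : Set.Nonempty {k | ∃ S : Finset V, IsDistEqSet G ↑S ∧ S.card = k} :=
      ⟨Fintype.card V, Finset.univ,
        fun u v hu _ _ => absurd (Finset.mem_coe.mpr (Finset.mem_univ u)) hu, Finset.card_univ⟩
    have hmem := Nat.sInf_mem hnonempty
    rw [show sInf {k | ∃ S : Finset V, IsDistEqSet G ↑S ∧ S.card = k} = eqdim G from rfl,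
      h] at hmem
    obtain ⟨S, hS, hcard⟩ := hmem
    obtain ⟨x, rfl⟩ := Finset.card_eq_one.mp hcard
    -- x has a neighbor w'
    obtain ⟨w, hw⟩ := Fintype.exists_ne_of_one_lt_card (by omega) x
    obtain ⟨p, hp⟩ := (hconn x w).exists_walk_length_eq_dist
    have hdpos : 0 < G.dist x w := hconn.pos_dist_of_ne (Ne.symm hw)
    have hadjw : G.Adj x (p.getVert 1) := by
      have := p.adj_getVert_succ (i := 0) (by omega)
      simpa using this
    set w' := p.getVert 1 with hw'
    have hw'x : w' ≠ x := fun hh => G.irrefl (hh ▸ hadjw)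
    have hdw' : G.dist w' x = 1 := SimpleGraph.dist_eq_one_iff_adj.mpr hadjw.symm
    -- every u ≠ x has dist u x = 1
    have hall : ∀ u : V, u ≠ x → G.dist u x = 1 := by
      intro u hu
      by_cases huw : u = w'
      · rw [huw]; exact hdw'
      · obtain ⟨y, hy, hd⟩ := hS u w' (by simpa using hu) (by simpa using hw'x) huw
        simp only [Finset.coe_singleton, Set.mem_singleton_iff] at hy
        subst hy
        rw [hd, hdw']
    have hadj : ∀ u : V, u ≠ x → G.Adj u x := fun u hu =>
      SimpleGraph.dist_eq_one_iff_adj.mp (hall u hu)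
    have hdeg : G.degree x = Fintype.card V - 1 := by
      have : G.neighborFinset x = Finset.univ.erase x := by
        ext u
        simp only [SimpleGraph.mem_neighborFinset, Finset.mem_erase, Finset.mem_univ, and_true]
        constructor
        · intro hu; exact fun hux => G.irrefl (hux ▸ hu)
        · intro hu; exact (hadj u hu).symm
      rw [← SimpleGraph.card_neighborFinset_eq_degree, this,
        Finset.card_erase_of_mem (Finset.mem_univ x), Finset.card_univ]
    have h1 := G.degree_le_maxDegree x
    have h2 := G.maxDegree_lt_card_verts
    omega
  · intro h
    obtain ⟨x, hx⟩ := G.exists_maximal_degree_vertex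
    rw [h] at hx
    have hadj : ∀ u : V, u ≠ x → G.Adj u x := by
      intro u hu
      have hsub : G.neighborFinset x ⊆ Finset.univ.erase x := by
        intro w hw
        simp only [Finset.mem_erase, Finset.mem_univ, and_true]
        exact fun hwx => G.irrefl (hwx ▸ (SimpleGraph.mem_neighborFinset _ _ _).mp hw)
      have hcard : (Finset.univ.erase x).card = Fintype.card V - 1 := by
        rw [Finset.card_erase_of_mem (Finset.mem_univ x), Finset.card_univ]
      have heq : G.neighborFinset x = Finset.univ.erase x := by
        apply Finset.eq_of_subset_of_card_le hsub
        rw [hcard, SimpleGraph.card_neighborFinset_eq_degree, ← hx]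
      have hu' : u ∈ G.neighborFinset x := by rw [heq]; simp [hu]
      exact ((SimpleGraph.mem_neighborFinset _ _ _).mp hu').symm
    have hS : IsDistEqSet G ({x} : Finset V) := by
      intro u v hu hv _
      refine ⟨x, by simp, ?_⟩
      have h1 : G.dist u x = 1 := SimpleGraph.dist_eq_one_iff_adj.mpr (hadj u (by simpa using hu))
      have h2 : G.dist v x = 1 := SimpleGraph.dist_eq_one_iff_adj.mpr (hadj v (by simpa using hv))
      rw [h1, h2]
    have hle : eqdim G ≤ 1 := Nat.sInf_le ⟨{x}, hS, Finset.card_singleton x⟩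
    have hge : 1 ≤ eqdim G := by
      rcases Nat.eq_zero_or_pos (eqdim G) with h' | h'
      · exfalso
        rw [eqdim, Nat.sInf_eq_zero] at h'
        rcases h' with h' | h'
        · obtain ⟨S, hSd, hcard0⟩ := h'
          rw [Finset.card_eq_zero] at hcard0
          subst hcard0
          obtain ⟨u, v, huv⟩ := Fintype.exists_pair_of_one_lt_card (α := V) (by omega)
          obtain ⟨y, hy, -⟩ := hSd u v (by simp) (by simp) huv
          simp at hy
        · exact Set.notMem_empty 1 (h' ▸ ⟨{x}, hS, Finset.card_singleton x⟩)
      · exact h'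
    omega
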